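/- Let ζ: R → C \ {0} be continuous and 1-periodic with ζ(x)·ζ(x+1/2) = 1 for all x. Then there exists a continuous 1-periodic function ξ: R → C \ {0} such that ξ(x)·ξ(x+1/2)^{-1} = −ζ(x) for all x. Moreover, if ζ is real-analytic then ξ may be chosen real-analytic. -/

import Mathlib

open Complex Set

local notation "π" => Real.pi

private lemma aux_telescope (f : ℕ → ℂ) (hf : ∀ k, f k ≠ 0) :
    ∀ n, ∏ k ∈ Finset.range n, (f (k + 1) / f k) = f n / f 0 := by
  intro n
  induction n with
  | zero => simp [div_self (hf 0)]
  | succ n ih =>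
      rw [Finset.prod_range_succ, ih]
      field_simp
      exact mul_div_mul_left _ _ (hf n)

private lemma aux_norm_int (m : ℤ) : ‖(m : ℂ) * (2 * (π : ℂ) * I)‖ = |(m : ℝ)| * (2 * π) := by
  simp [norm_mul, Complex.norm_intCast, abs_of_pos Real.pi_pos]

private lemma aux_int_zero (m : ℤ) (h : ‖(m : ℂ) * (2 * (π : ℂ) * I)‖ < π) : m = 0 := by
  rw [aux_norm_int] at h
  by_contra hm
  have h1 : (1 : ℝ) ≤ |(m : ℝ)| := by
    rw [← Int.cast_abs]
    exact_mod_cast Int.one_le_abs (by simpa using hm)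
  nlinarith [Real.pi_pos]

/-- A continuous function with values in `2πiℤ` on a preconnected set is constant there. -/
private lemma aux_const {F : ℝ → ℂ} (hF : Continuous F) {s : Set ℝ} (hs : IsPreconnected s)
    (h : ∀ x ∈ s, ∃ m : ℤ, F x = (m : ℂ) * (2 * (π : ℂ) * I))
    {a : ℝ} (ha : a ∈ s) {x : ℝ} (hx : x ∈ s) : F x = F a := by
  set u : Set ℝ := {y | ‖F y - F a‖ < π} with hu_def
  set v : Set ℝ := {y | π < ‖F y - F a‖} with hv_def
  have hcont : Continuous fun y => ‖F y - F a‖ := (hF.sub continuous_const).norm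
  have hu : IsOpen u := isOpen_Iio.preimage hcont
  have hv : IsOpen v := isOpen_Ioi.preimage hcont
  have hdisj : Disjoint u v := by
    rw [Set.disjoint_left]
    intro y hy1 hy2
    simp only [hu_def, hv_def, Set.mem_setOf_eq] at hy1 hy2
    linarith
  have hdiff : ∀ y ∈ s, ∃ m : ℤ, F y - F a = (m : ℂ) * (2 * (π : ℂ) * I) := by
    intro y hy
    obtain ⟨m, hm⟩ := h y hy
    obtain ⟨ma, hma⟩ := h a ha
    exact ⟨m - ma, by rw [hm, hma]; push_cast; ring⟩
  have hsub : s ⊆ u ∪ v := by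
    intro y hy
    obtain ⟨m, hm⟩ := hdiff y hy
    rcases eq_or_ne m 0 with h0 | h0
    · left
      simp [hu_def, hm, h0, Real.pi_pos]
    · right
      have h1 : (1 : ℝ) ≤ |(m : ℝ)| := by
        rw [← Int.cast_abs]
        exact_mod_cast Int.one_le_abs (by simpa using h0)
      simp only [hv_def, Set.mem_setOf_eq, hm, aux_norm_int]
      nlinarith [Real.pi_pos]
  have hsu : (s ∩ u).Nonempty := ⟨a, ha, by simp [hu_def, Real.pi_pos]⟩
  have := hs.subset_left_of_subset_union hu hv hdisj hsub hsu
  obtain ⟨m, hm⟩ := hdiff x hx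
  have hxu : x ∈ u := this hx
  rw [hu_def, Set.mem_setOf_eq, hm] at hxu
  have := aux_int_zero m hxu
  rw [this] at hm
  simpa [sub_eq_zero] using hm

private lemma aux_slit {z : ℂ} (h : ‖z - 1‖ < 1) : z ∈ Complex.slitPlane := by
  rw [Complex.mem_slitPlane_iff]
  left
  have h1 : |(z - 1).re| ≤ ‖z - 1‖ := Complex.abs_re_le_norm (z - 1)
  simp only [Complex.sub_re, Complex.one_re] at h1
  have := abs_lt.mp (lt_of_le_of_lt h1 h)
  linarith [this.1]

/-- Existence of a continuous periodic logarithm. -/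
private lemma aux_exists_log (ζ : ℝ → ℂ) (hc : Continuous ζ) (hnz : ∀ x, ζ x ≠ 0)
    (hper : ∀ x, ζ (x + 1) = ζ x) (hrel : ∀ x, ζ x * ζ (x + 1/2) = 1) :
    ∃ G : ℝ → ℂ, Continuous G ∧ (∀ x, Complex.exp (G x) = ζ x) ∧ (∀ x, G (x + 1) = G x) := by
  -- minimum of ‖ζ‖ on [0,1]
  obtain ⟨t₀, ht₀, hmin⟩ := (isCompact_Icc : IsCompact (Icc (0:ℝ) 1)).exists_isMinOn
    ⟨0, by norm_num⟩ (hc.norm.continuousOn)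
  set m : ℝ := ‖ζ t₀‖ with hm_def
  have hm : 0 < m := norm_pos_iff.mpr (hnz t₀)
  have hmin' : ∀ t ∈ Icc (0:ℝ) 1, m ≤ ‖ζ t‖ := fun t ht => hmin ht
  -- uniform continuity on [0,1]
  have huc : UniformContinuousOn ζ (Icc 0 1) :=
    (isCompact_Icc).uniformContinuousOn_of_continuous hc.continuousOn
  rw [Metric.uniformContinuousOn_iff] at huc
  obtain ⟨δ, hδpos, hδ⟩ := huc m hm
  obtain ⟨N, hNpos, hNδ⟩ : ∃ N : ℕ, 0 < N ∧ 1 / (N : ℝ) < δ := by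
    obtain ⟨n₀, hn₀⟩ := exists_nat_one_div_lt hδpos
    exact ⟨n₀ + 1, Nat.succ_pos _, by exact_mod_cast hn₀⟩
  have hNR : (0:ℝ) < N := by exact_mod_cast hNpos
  set F : ℝ → ℕ → ℂ := fun x k => ζ (min x ((k : ℝ) / N)) with hF_def
  set g₀ : ℝ → ℂ := fun x =>
    Complex.log (ζ 0) + ∑ k ∈ Finset.range N, Complex.log (F x (k + 1) / F x k) with hg₀_def
  -- key bound
  have key : ∀ (x : ℝ) (k : ℕ), k < N → ‖F x (k + 1) / F x k - 1‖ < 1 := by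
    intro x k hk
    rcases le_or_gt x ((k : ℝ) / N) with h | h
    · have hb : min x ((k : ℝ) / N) = x := min_eq_left h
      have hkk : (k : ℝ) / N ≤ ((k : ℕ) + 1 : ℝ) / N := by gcongr; linarith
      have ha : min x (((k + 1 : ℕ) : ℝ) / N) = x := by
        apply min_eq_left; push_cast; linarith
      simp only [hF_def, ha, hb]
      rw [div_self (hnz x)]
      simp
    · have hb : min x ((k : ℝ) / N) = (k : ℝ) / N := min_eq_right h.le
      set a : ℝ := min x (((k + 1 : ℕ) : ℝ) / N) with ha_def
      have ha1 : (k : ℝ) / N ≤ a := by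
        apply le_min h.le
        push_cast
        gcongr
        linarith
      have ha2 : a ≤ ((k : ℝ) + 1) / N := by
        rw [ha_def]; push_cast
        exact min_le_right _ _
      have hk1 : ((k : ℝ) + 1) ≤ N := by exact_mod_cast hk
      have hbmem : (k : ℝ) / N ∈ Icc (0:ℝ) 1 := by
        constructor
        · positivity
        · rw [div_le_one hNR]; linarith
      have hamem : a ∈ Icc (0:ℝ) 1 := by
        constructor
        · have : (0:ℝ) ≤ (k : ℝ) / N := by positivity
          linarith
        · calc a ≤ ((k : ℝ) + 1) / N := ha2
            _ ≤ 1 := by rw [div_le_one hNR]; linarith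
      have hdist : dist a ((k : ℝ) / N) < δ := by
        rw [Real.dist_eq, _root_.abs_of_nonneg (by linarith)]
        have : a - (k : ℝ) / N ≤ 1 / N := by
          have : ((k : ℝ) + 1) / N - (k : ℝ) / N = 1 / N := by field_simp; ring
          linarith
        linarith
      have hd := hδ a hamem ((k : ℝ) / N) hbmem hdist
      rw [Complex.dist_eq] at hd
      have hζb : m ≤ ‖ζ ((k : ℝ) / N)‖ := hmin' _ hbmem
      simp only [hF_def, hb]
      have hne : ζ ((k : ℝ) / N) ≠ 0 := hnz _
      rw [div_sub_one hne, norm_div, div_lt_one (norm_pos_iff.mpr hne)]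
      calc ‖ζ a - ζ ((k : ℝ) / N)‖ < m := hd
        _ ≤ ‖ζ ((k : ℝ) / N)‖ := hζb
  have hFnz : ∀ x k, F x k ≠ 0 := fun x k => hnz _
  -- continuity of g₀
  have hg₀c : Continuous g₀ := by
    apply continuous_const.add
    apply continuous_finset_sum
    intro k hk
    rw [Finset.mem_range] at hk
    have hq_cont : Continuous fun x => F x (k + 1) / F x k := by
      apply Continuous.div
      · exact hc.comp (continuous_id.min continuous_const)
      · exact hc.comp (continuous_id.min continuous_const)
      · intro x; exact hFnz x k
    rw [continuous_iff_continuousAt]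
    intro x
    exact (continuousAt_clog (aux_slit (by simpa using key x k hk))).comp
      hq_cont.continuousAt
  -- exp ∘ g₀ = ζ on [0,1]
  have hg₀exp : ∀ x ∈ Icc (0:ℝ) 1, Complex.exp (g₀ x) = ζ x := by
    intro x hx
    have h1 : Complex.exp (g₀ x) = ζ 0 * ∏ k ∈ Finset.range N, (F x (k + 1) / F x k) := by
      rw [hg₀_def]
      rw [Complex.exp_add, Complex.exp_log (hnz 0), Complex.exp_sum]
      congr 1
      exact Finset.prod_congr rfl fun k _ =>
        Complex.exp_log (div_ne_zero (hFnz x (k + 1)) (hFnz x k))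
    rw [h1, aux_telescope (F x) (hFnz x) N]
    have hFN : F x N = ζ x := by
      simp only [hF_def]
      rw [div_self (ne_of_gt hNR), min_eq_left hx.2]
    have hF0 : F x 0 = ζ 0 := by
      simp only [hF_def]
      norm_num
      rw [min_eq_right hx.1]
    rw [hFN, hF0, mul_comm, div_mul_cancel₀ _ (hnz 0)]
  -- g₀ 1 = g₀ 0
  have h10 : g₀ 1 = g₀ 0 := by
    have hFc : Continuous fun y => g₀ y + g₀ (y + 1/2) :=
      hg₀c.add (hg₀c.comp (continuous_id.add continuous_const))
    have hint : ∀ y ∈ Icc (0:ℝ) (1/2), ∃ mm : ℤ,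
        g₀ y + g₀ (y + 1/2) = (mm : ℂ) * (2 * (π:ℂ) * I) := by
      intro y hy
      apply Complex.exp_eq_one_iff.mp
      rw [Complex.exp_add, hg₀exp y ⟨hy.1, by linarith [hy.2]⟩,
        hg₀exp (y + 1/2) ⟨by linarith [hy.1], by linarith [hy.2]⟩]
      exact hrel y
    have := aux_const hFc isPreconnected_Icc hint
      (show (0:ℝ) ∈ Icc (0:ℝ) (1/2) by norm_num)
      (show (1/2 : ℝ) ∈ Icc (0:ℝ) (1/2) by norm_num)
    norm_num at this
    linear_combination this
  -- periodic extension
  set G : ℝ → ℂ := fun x => AddCircle.liftIco 1 0 g₀ ↑x with hG_def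
  have hGper : ∀ x, G (x + 1) = G x := by
    intro x
    simp only [hG_def]
    congr 1
    exact AddCircle.coe_add_period 1 x
  have hGperZ : Function.Periodic G 1 := hGper
  have hGfract : ∀ x, G x = g₀ (Int.fract x) := by
    intro x
    have h1 : G (Int.fract x) = G x := by
      have := hGperZ.sub_int_mul_eq (x := x) ⌊x⌋
      rw [mul_one] at this
      rw [Int.fract]
      exact this
    rw [← h1, hG_def]
    exact AddCircle.liftIco_zero_coe_apply ⟨Int.fract_nonneg x, Int.fract_lt_one x⟩
  have hGc : Continuous G :=
    (AddCircle.liftIco_zero_continuous h10.symm hg₀c.continuousOn).comp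
      (AddCircle.continuous_mk' 1)
  have hperZ : Function.Periodic ζ 1 := hper
  have hGexp : ∀ x, Complex.exp (G x) = ζ x := by
    intro x
    rw [hGfract x, hg₀exp _ ⟨Int.fract_nonneg x, (Int.fract_lt_one x).le⟩]
    have := hperZ.sub_int_mul_eq (x := x) ⌊x⌋
    rw [mul_one] at this
    rw [Int.fract]
    exact this
  exact ⟨G, hGc, hGexp, hGper⟩

/-- Given a continuous 1-periodic nonvanishing `ζ : ℝ → ℂ` with
`ζ(x)·ζ(x+1/2) = 1`, there is a continuous 1-periodic nonvanishing `ξ : ℝ → ℂ`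
with `ξ(x)·ξ(x+1/2)⁻¹ = −ζ(x)`; moreover, if `ζ` is real-analytic then `ξ` can
be chosen real-analytic. -/
theorem exists_periodic_squareroot_twist (ζ : ℝ → ℂ)
    (hc : Continuous ζ) (hnz : ∀ x, ζ x ≠ 0)
    (hper : ∀ x, ζ (x + 1) = ζ x)
    (hrel : ∀ x, ζ x * ζ (x + 1/2) = 1) :
    (∃ ξ : ℝ → ℂ, Continuous ξ ∧ (∀ x, ξ (x + 1) = ξ x) ∧ (∀ x, ξ x ≠ 0) ∧
      (∀ x, ξ x * (ξ (x + 1/2))⁻¹ = -ζ x)) ∧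
    (AnalyticOnNhd ℝ ζ Set.univ →
      ∃ ξ : ℝ → ℂ, AnalyticOnNhd ℝ ξ Set.univ ∧ Continuous ξ ∧
        (∀ x, ξ (x + 1) = ξ x) ∧ (∀ x, ξ x ≠ 0) ∧
        (∀ x, ξ x * (ξ (x + 1/2))⁻¹ = -ζ x)) := by
  obtain ⟨G, hGc, hGexp, hGper⟩ := aux_exists_log ζ hc hnz hper hrel
  have h1 : Complex.exp (G 0 + G (1/2)) = 1 := by
    rw [Complex.exp_add, hGexp, hGexp]
    simpa using hrel 0
  obtain ⟨K, hK⟩ := Complex.exp_eq_one_iff.mp h1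
  have hW : ∀ x, G x + G (x + 1/2) = (K : ℂ) * (2 * (π:ℂ) * Complex.I) := by
    intro x
    have hFc : Continuous fun y => G y + G (y + 1/2) :=
      hGc.add (hGc.comp (continuous_id.add continuous_const))
    have hint : ∀ y ∈ (Set.univ : Set ℝ), ∃ mm : ℤ,
        G y + G (y + 1/2) = (mm : ℂ) * (2 * (π:ℂ) * Complex.I) := by
      intro y _
      apply Complex.exp_eq_one_iff.mp
      rw [Complex.exp_add, hGexp, hGexp]
      exact hrel y
    have := aux_const hFc isPreconnected_univ hint (Set.mem_univ 0) (Set.mem_univ x)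
    rw [this, show (0:ℝ) + 1/2 = 1/2 by norm_num]
    exact hK
  set c : ℂ := -(((K : ℂ) + 1) * (2 * (π:ℂ) * Complex.I)) with hc_def
  have hexpc : Complex.exp c = 1 := by
    have h := Complex.exp_int_mul_two_pi_mul_I (-(K + 1))
    rw [show ((-(K + 1) : ℤ) : ℂ) * (2 * (π:ℂ) * Complex.I) = c by push_cast [hc_def]; ring] at h
    exact h
  set ξ : ℝ → ℂ := fun x => Complex.exp (G x / 2 + c * x) with hξ_def
  have hξc : Continuous ξ :=
    Complex.continuous_exp.comp ((hGc.div_const 2).add (continuous_const.mul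
      Complex.continuous_ofReal))
  have hξnz : ∀ x, ξ x ≠ 0 := fun x => Complex.exp_ne_zero _
  have hξper : ∀ x, ξ (x + 1) = ξ x := by
    intro x
    simp only [hξ_def]
    rw [hGper]
    push_cast
    rw [show G x / 2 + c * ((x:ℂ) + 1) = (G x / 2 + c * x) + c by ring, Complex.exp_add,
      hexpc, mul_one]
  have hξrel : ∀ x, ξ x * (ξ (x + 1/2))⁻¹ = -ζ x := by
    intro x
    have h2 : G (x + 1/2) = (K : ℂ) * (2 * (π:ℂ) * Complex.I) - G x := by
      linear_combination hW x
    simp only [hξ_def]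
    rw [← Complex.exp_neg, ← Complex.exp_add]
    have h3 : G x / 2 + c * x + -(G (x + 1/2) / 2 + c * ((x : ℝ) + 1/2 : ℝ)) =
        G x + (π:ℂ) * Complex.I := by
      rw [h2]
      push_cast [hc_def]
      ring
    rw [h3, Complex.exp_add, hGexp x, Complex.exp_pi_mul_I]
    ring
  refine ⟨⟨ξ, hξc, hξper, hξnz, hξrel⟩, fun hA => ⟨ξ, ?_, hξc, hξper, hξnz, hξrel⟩⟩
  -- analytic case
  have hGa : ∀ x₀ : ℝ, AnalyticAt ℝ G x₀ := by
    intro x₀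
    have hq : AnalyticAt ℝ (fun x => ζ x * (ζ x₀)⁻¹) x₀ :=
      (hA x₀ (Set.mem_univ _)).mul analyticAt_const
    have hval : ζ x₀ * (ζ x₀)⁻¹ = 1 := mul_inv_cancel₀ (hnz x₀)
    have hlog : AnalyticAt ℝ (fun x => Complex.log (ζ x * (ζ x₀)⁻¹)) x₀ := by
      have h1 : AnalyticAt ℂ Complex.log (ζ x₀ * (ζ x₀)⁻¹) := by
        rw [hval]; exact analyticAt_clog (by simp [Complex.mem_slitPlane_iff])
      exact ((h1.restrictScalars (𝕜 := ℝ)).comp (f := fun x => ζ x * (ζ x₀)⁻¹) (x := x₀) hq :)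
    have h1 : AnalyticAt ℝ (fun x => G x₀ + Complex.log (ζ x * (ζ x₀)⁻¹)) x₀ :=
      analyticAt_const.add hlog
    apply h1.congr
    -- eventual equality
    set D : ℝ → ℂ := fun x => G x - G x₀ - Complex.log (ζ x * (ζ x₀)⁻¹) with hD_def
    have hDint : ∀ x, ∃ mm : ℤ, D x = (mm : ℂ) * (2 * (π:ℂ) * Complex.I) := by
      intro x
      apply Complex.exp_eq_one_iff.mp
      simp only [hD_def]
      rw [Complex.exp_sub, Complex.exp_sub, hGexp, hGexp,
        Complex.exp_log (mul_ne_zero (hnz x) (inv_ne_zero (hnz x₀)))]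
      field_simp
      rw [mul_comm (ζ x) (ζ x₀)]
      exact div_self (mul_ne_zero (hnz x₀) (hnz x))
    have hD0 : D x₀ = 0 := by
      simp only [hD_def]
      rw [hval, Complex.log_one]
      ring
    have hDc : ContinuousAt D x₀ := by
      apply ContinuousAt.sub
      · exact (hGc.continuousAt).sub continuousAt_const
      · exact ContinuousAt.comp (g := Complex.log) (x := x₀)
          (f := fun x => ζ x * (ζ x₀)⁻¹)
          (by show ContinuousAt Complex.log (ζ x₀ * (ζ x₀)⁻¹)
              rw [hval]; exact continuousAt_clog (by simp [Complex.mem_slitPlane_iff]))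
          ((hc.mul continuous_const).continuousAt)
    have hball : ∀ᶠ x in nhds x₀, D x ∈ Metric.ball (D x₀) π :=
      hDc (Metric.ball_mem_nhds _ Real.pi_pos)
    filter_upwards [hball] with x hx
    obtain ⟨mm, hmm⟩ := hDint x
    rw [Metric.mem_ball, hD0, dist_zero_right, hmm] at hx
    have := aux_int_zero mm hx
    rw [this] at hmm
    simp only [Int.cast_zero, zero_mul] at hmm
    have hDx : D x = 0 := hmm
    simp only [hD_def] at hDx
    linear_combination -hDx
  intro x _
  have hbody : AnalyticAt ℝ (fun y : ℝ => G y / 2 + c * y) x := by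
    apply AnalyticAt.add
    · exact (hGa x).div analyticAt_const (by norm_num)
    · exact analyticAt_const.mul (Complex.ofRealCLM.analyticAt x)
  exact (analyticAt_cexp.restrictScalars.comp hbody : AnalyticAt ℝ _ x)
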